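/- For a finite set T, integrable random process X on T, and probability measures μ, μ' on T, and any coupling (Z,Z') of μ and μ', one has F(X,μ) − F(X,μ') ≤ 2 sup over couplings of X with (Z,Z') of E[1_{Z≠Z'} ‖X‖], where ‖X‖ = max_{t∈T}|X_t|. -/
import Mathlib

set_option maxHeartbeats 1000000

open MeasureTheory ProbabilityTheory Real Filter

/-- Fernique's functional. -/
noncomputable def fernique {T : Type*} [Fintype T] [MeasurableSpace T]
    (P : Measure (T → ℝ)) (μ : Measure T) : ℝ :=
  sSup { r | ∃ ρ : Measure ((T → ℝ) × T), IsProbabilityMeasure ρ ∧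
      ρ.map Prod.fst = P ∧ ρ.map Prod.snd = μ ∧ r = ∫ p, p.1 p.2 ∂ρ }

section aux

set_option linter.unusedSectionVars false

variable {T : Type*} [Fintype T] [Nonempty T] [MeasurableSpace T] [MeasurableSingletonClass T]

lemma meas_eval : Measurable (fun p : (T → ℝ) × T => p.1 p.2) := by
  classical
  have h : (fun p : (T → ℝ) × T => p.1 p.2) =
      fun p => ∑ t : T, if p.2 = t then p.1 t else 0 := by
    ext p
    rw [Finset.sum_ite_eq Finset.univ p.2 (fun t => p.1 t)]
    simp
  rw [h]
  refine Finset.measurable_sum _ fun t _ => ?_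
  exact Measurable.ite (measurable_snd (measurableSet_singleton t))
    ((measurable_pi_apply t).comp measurable_fst) measurable_const

lemma meas_norm : Measurable (fun x : T → ℝ => ‖x‖) := by measurability

lemma abs_eval_le (x : T → ℝ) (t : T) : |x t| ≤ ‖x‖ := by
  rw [← Real.norm_eq_abs]; exact norm_le_pi_norm x t

/-- Integrability and value of the norm of the first coordinate under a coupling. -/
lemma coupling_norm {α : Type*} [MeasurableSpace α] {P : Measure (T → ℝ)}
    (hP : Integrable (fun x => ‖x‖) P)
    (ρ : Measure ((T → ℝ) × α)) [IsProbabilityMeasure ρ] (h : ρ.map Prod.fst = P) :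
    Integrable (fun p : (T → ℝ) × α => ‖p.1‖) ρ ∧
      ∫ p, ‖p.1‖ ∂ρ = ∫ x, ‖x‖ ∂P := by
  have h1 : Integrable (fun x : T → ℝ => ‖x‖) (ρ.map Prod.fst) := h ▸ hP
  have h2 := (integrable_map_measure meas_norm.aestronglyMeasurable
    measurable_fst.aemeasurable).mp h1
  refine ⟨h2, ?_⟩
  rw [← h, integral_map measurable_fst.aemeasurable meas_norm.aestronglyMeasurable]

/-- indicator function measurability -/
lemma meas_ind : Measurable (fun p : (T → ℝ) × (T × T) =>
    Set.indicator {q : T × T | q.1 ≠ q.2} (fun _ => ‖p.1‖) p.2) := by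
  classical
  have h : (fun p : (T → ℝ) × (T × T) =>
      Set.indicator {q : T × T | q.1 ≠ q.2} (fun _ => ‖p.1‖) p.2) =
      fun p => if p.2 ∈ {q : T × T | q.1 ≠ q.2} then ‖p.1‖ else 0 := by
    ext p; rw [Set.indicator_apply]
  rw [h]
  refine Measurable.ite ?_ (meas_norm.comp measurable_fst) measurable_const
  exact measurable_snd ((Set.to_countable _).measurableSet)

lemma ind_le (p : (T → ℝ) × (T × T)) :
    Set.indicator {q : T × T | q.1 ≠ q.2} (fun _ => ‖p.1‖) p.2 ≤ ‖p.1‖ := by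
  classical
  by_cases h : p.2 ∈ {q : T × T | q.1 ≠ q.2}
  · rw [Set.indicator_of_mem h]
  · rw [Set.indicator_of_notMem h]; exact norm_nonneg _

lemma ind_nonneg (p : (T → ℝ) × (T × T)) :
    0 ≤ Set.indicator {q : T × T | q.1 ≠ q.2} (fun _ => ‖p.1‖) p.2 := by
  classical
  by_cases h : p.2 ∈ {q : T × T | q.1 ≠ q.2}
  · rw [Set.indicator_of_mem h]; exact norm_nonneg _
  · rw [Set.indicator_of_notMem h]

end aux

/-- For any coupling `ν` of `μ` and `μ'`, the difference of Fernique's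
functionals is bounded by twice the supremum over couplings of the law of `X`
with `ν` of `E[1_{Z ≠ Z'} ‖X‖]`. -/
theorem stmt17 {T : Type*} [Fintype T] [Nonempty T] [MeasurableSpace T]
    [MeasurableSingletonClass T]
    {Ω : Type*} [MeasureSpace Ω] [IsProbabilityMeasure (ℙ : Measure Ω)]
    (X : Ω → T → ℝ) (hXm : Measurable X) (hXint : Integrable (fun ω => ‖X ω‖) ℙ)
    (μ μ' : Measure T) [IsProbabilityMeasure μ] [IsProbabilityMeasure μ']
    (ν : Measure (T × T)) [IsProbabilityMeasure ν]
    (hν₁ : ν.map Prod.fst = μ) (hν₂ : ν.map Prod.snd = μ') :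
    fernique (Measure.map X ℙ) μ - fernique (Measure.map X ℙ) μ' ≤
      2 * sSup { r | ∃ ρ : Measure ((T → ℝ) × (T × T)),
        IsProbabilityMeasure ρ ∧
        ρ.map Prod.fst = Measure.map X ℙ ∧ ρ.map Prod.snd = ν ∧
        r = ∫ p, Set.indicator {q : T × T | q.1 ≠ q.2} (fun _ => ‖p.1‖) p.2 ∂ρ } := by
  set P : Measure (T → ℝ) := Measure.map X ℙ with hPdef
  haveI : IsProbabilityMeasure P := Measure.isProbabilityMeasure_map hXm.aemeasurable
  have hP : Integrable (fun x : T → ℝ => ‖x‖) P :=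
    (integrable_map_measure meas_norm.aestronglyMeasurable hXm.aemeasurable).mpr hXint
  set M : ℝ := ∫ x, ‖x‖ ∂P with hMdef
  set S₁ := { r | ∃ ρ : Measure ((T → ℝ) × T), IsProbabilityMeasure ρ ∧
      ρ.map Prod.fst = P ∧ ρ.map Prod.snd = μ ∧ r = ∫ p, p.1 p.2 ∂ρ } with hS₁
  set S₂ := { r | ∃ ρ : Measure ((T → ℝ) × T), IsProbabilityMeasure ρ ∧
      ρ.map Prod.fst = P ∧ ρ.map Prod.snd = μ' ∧ r = ∫ p, p.1 p.2 ∂ρ } with hS₂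
  set S₃ := { r | ∃ ρ : Measure ((T → ℝ) × (T × T)), IsProbabilityMeasure ρ ∧
        ρ.map Prod.fst = P ∧ ρ.map Prod.snd = ν ∧
        r = ∫ p, Set.indicator {q : T × T | q.1 ≠ q.2} (fun _ => ‖p.1‖) p.2 ∂ρ } with hS₃
  -- bounds
  have hbdd₂ : ∀ r ∈ S₂, r ≤ M := by
    rintro r ⟨ρ, hprob, hfst, hsnd, rfl⟩
    have hn := coupling_norm hP ρ hfst
    calc ∫ p, p.1 p.2 ∂ρ ≤ ∫ p, ‖p.1‖ ∂ρ := by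
          refine integral_mono ?_ hn.1 (fun p => (le_abs_self _).trans (abs_eval_le _ _))
          exact hn.1.mono' meas_eval.aestronglyMeasurable
            (.of_forall fun p => by simpa [Real.norm_eq_abs] using abs_eval_le p.1 p.2)
      _ = M := hn.2
  have hbdd₃ : ∀ r ∈ S₃, r ≤ M := by
    rintro r ⟨ρ, hprob, hfst, hsnd, rfl⟩
    have hn := coupling_norm hP ρ hfst
    calc (∫ p, Set.indicator {q : T × T | q.1 ≠ q.2} (fun _ => ‖p.1‖) p.2 ∂ρ)
        ≤ ∫ p, ‖p.1‖ ∂ρ := by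
          refine integral_mono ?_ hn.1 ind_le
          exact hn.1.mono' meas_ind.aestronglyMeasurable
            (.of_forall fun p => by
              rw [Real.norm_eq_abs, abs_of_nonneg (ind_nonneg p)]; exact ind_le p)
      _ = M := hn.2
  have hBdd₂ : BddAbove S₂ := ⟨M, hbdd₂⟩
  have hBdd₃ : BddAbove S₃ := ⟨M, hbdd₃⟩
  -- nonemptiness of S₁
  have hne₁ : S₁.Nonempty :=
    ⟨∫ p, p.1 p.2 ∂(P.prod μ), ⟨P.prod μ, inferInstance, Measure.fst_prod,
      Measure.snd_prod, rfl⟩⟩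
  -- the conditional kernel
  set κ : Kernel T T := ν.condKernel with hκ
  have hνfst : ν.fst = μ := hν₁
  have hglue : ν.fst ⊗ₘ κ = ν := ν.disintegrate _
  -- main estimate for each element of S₁
  have hmain : ∀ r ∈ S₁, r ≤ sSup S₂ + 2 * sSup S₃ := by
    rintro r ⟨ρ₁, hprob₁, hfst₁, hsnd₁, rfl⟩
    set η : Kernel ((T → ℝ) × T) T := κ.comap Prod.snd measurable_snd with hη
    haveI : IsMarkovKernel η := Kernel.IsMarkovKernel.comap κ measurable_snd
    set ρ₂ : Measure (((T → ℝ) × T) × T) := ρ₁ ⊗ₘ η with hρ₂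
    haveI : IsProbabilityMeasure ρ₂ := by rw [hρ₂]; infer_instance
    have hemb : Measurable (fun p : ((T → ℝ) × T) × T => (p.1.1, (p.1.2, p.2))) :=
      (measurable_fst.comp measurable_fst).prodMk
        ((measurable_snd.comp measurable_fst).prodMk measurable_snd)
    set ρ : Measure ((T → ℝ) × (T × T)) :=
      ρ₂.map (fun p => (p.1.1, (p.1.2, p.2))) with hρ
    haveI : IsProbabilityMeasure ρ := by
      rw [hρ]; exact Measure.isProbabilityMeasure_map hemb.aemeasurable
    have hfst₂ : ρ₂.map Prod.fst = ρ₁ := Measure.fst_compProd _ _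
    have hfst : ρ.map Prod.fst = P := by
      rw [hρ, Measure.map_map measurable_fst hemb]
      have h : (Prod.fst ∘ fun p : ((T → ℝ) × T) × T => (p.1.1, (p.1.2, p.2))) =
          (Prod.fst ∘ Prod.fst) := rfl
      rw [h, ← Measure.map_map measurable_fst measurable_fst, hfst₂, hfst₁]
    have hπm : Measurable (fun p : (T → ℝ) × (T × T) => (p.1, p.2.1)) :=
      measurable_fst.prodMk (measurable_fst.comp measurable_snd)
    have hπ : ρ.map (fun p : (T → ℝ) × (T × T) => (p.1, p.2.1)) = ρ₁ := by
      rw [hρ, Measure.map_map hπm hemb]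
      have h : ((fun p : (T → ℝ) × (T × T) => (p.1, p.2.1)) ∘
          fun p : ((T → ℝ) × T) × T => (p.1.1, (p.1.2, p.2))) = Prod.fst := rfl
      rw [h, hfst₂]
    have hsnd : ρ.map Prod.snd = ν := by
      rw [hρ, Measure.map_map measurable_snd hemb]
      have heq : (Prod.snd ∘ fun p : ((T → ℝ) × T) × T => (p.1.1, (p.1.2, p.2))) =
          fun p => (p.1.2, p.2) := rfl
      rw [heq]
      ext s hs
      have hg : Measurable (fun p : ((T → ℝ) × T) × T => (p.1.2, p.2)) :=
        (measurable_snd.comp measurable_fst).prodMk measurable_snd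
      rw [Measure.map_apply hg hs, hρ₂, Measure.compProd_apply (hg hs)]
      have h1 : ∀ q : (T → ℝ) × T,
          η q (Prod.mk q ⁻¹' ((fun p : ((T → ℝ) × T) × T => (p.1.2, p.2)) ⁻¹' s)) =
          κ q.2 (Prod.mk q.2 ⁻¹' s) := fun q => rfl
      simp_rw [h1]
      have h2 : ∫⁻ a : (T → ℝ) × T, κ a.2 (Prod.mk a.2 ⁻¹' s) ∂ρ₁ =
          ∫⁻ t, κ t (Prod.mk t ⁻¹' s) ∂(ρ₁.map Prod.snd) :=
        (lintegral_map (measurable_of_countable fun t => κ t (Prod.mk t ⁻¹' s))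
          measurable_snd).symm
      rw [h2, hsnd₁, ← hνfst, ← Measure.compProd_apply hs, hglue]
    -- ρ' : coupling of P with μ'
    have hπ' : Measurable (fun p : (T → ℝ) × (T × T) => (p.1, p.2.2)) :=
      measurable_fst.prodMk (measurable_snd.comp measurable_snd)
    set ρ' : Measure ((T → ℝ) × T) := ρ.map (fun p => (p.1, p.2.2)) with hρ'
    haveI : IsProbabilityMeasure ρ' := by
      rw [hρ']; exact Measure.isProbabilityMeasure_map hπ'.aemeasurable
    have hfst' : ρ'.map Prod.fst = P := by
      rw [hρ', Measure.map_map measurable_fst hπ']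
      have h : (Prod.fst ∘ fun p : (T → ℝ) × (T × T) => (p.1, p.2.2)) = Prod.fst := rfl
      rw [h, hfst]
    have hsnd' : ρ'.map Prod.snd = μ' := by
      rw [hρ', Measure.map_map measurable_snd hπ']
      have h : (Prod.snd ∘ fun p : (T → ℝ) × (T × T) => (p.1, p.2.2)) =
          (Prod.snd ∘ Prod.snd) := rfl
      rw [h, ← Measure.map_map measurable_snd measurable_snd, hsnd, hν₂]
    -- integrals
    have hnrm := coupling_norm hP ρ hfst
    have hint₁ : Integrable (fun p : (T → ℝ) × (T × T) => p.1 p.2.1) ρ := by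
      refine hnrm.1.mono' ?_ (.of_forall fun p => by
        simpa [Real.norm_eq_abs] using abs_eval_le p.1 p.2.1)
      exact (meas_eval.comp (measurable_fst.prodMk
        (measurable_fst.comp measurable_snd))).aestronglyMeasurable
    have hint₂ : Integrable (fun p : (T → ℝ) × (T × T) => p.1 p.2.2) ρ := by
      refine hnrm.1.mono' ?_ (.of_forall fun p => by
        simpa [Real.norm_eq_abs] using abs_eval_le p.1 p.2.2)
      exact (meas_eval.comp hπ').aestronglyMeasurable
    have hint₃ : Integrable (fun p : (T → ℝ) × (T × T) =>
        Set.indicator {q : T × T | q.1 ≠ q.2} (fun _ => ‖p.1‖) p.2) ρ := by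
      refine hnrm.1.mono' meas_ind.aestronglyMeasurable (.of_forall fun p => ?_)
      rw [Real.norm_eq_abs, abs_of_nonneg (ind_nonneg p)]; exact ind_le p
    have hval₁ : ∫ q, q.1 q.2 ∂ρ₁ = ∫ p, p.1 p.2.1 ∂ρ := by
      rw [← hπ]
      exact integral_map hπm.aemeasurable meas_eval.aestronglyMeasurable
    have hval₂ : ∫ q, q.1 q.2 ∂ρ' = ∫ p, p.1 p.2.2 ∂ρ := by
      rw [hρ']
      exact integral_map hπ'.aemeasurable meas_eval.aestronglyMeasurable
    -- pointwise bound
    have hpt : ∀ p : (T → ℝ) × (T × T), p.1 p.2.1 - p.1 p.2.2 ≤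
        2 * Set.indicator {q : T × T | q.1 ≠ q.2} (fun _ => ‖p.1‖) p.2 := by
      intro p
      by_cases h : p.2.1 = p.2.2
      · rw [Set.indicator_of_notMem (by simpa using h), h]
        simp
      · rw [Set.indicator_of_mem (by exact h)]
        have h1 := abs_le.mp (abs_eval_le p.1 p.2.1)
        have h2 := abs_le.mp (abs_eval_le p.1 p.2.2)
        linarith [h1.1, h1.2, h2.1, h2.2]
    have hdiff : ∫ p, p.1 p.2.1 ∂ρ - ∫ p, p.1 p.2.2 ∂ρ ≤
        2 * ∫ p, Set.indicator {q : T × T | q.1 ≠ q.2} (fun _ => ‖p.1‖) p.2 ∂ρ := by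
      rw [← integral_sub hint₁ hint₂, ← integral_const_mul]
      exact integral_mono (hint₁.sub hint₂) (hint₃.const_mul 2) hpt
    have hmem₂ : ∫ q, q.1 q.2 ∂ρ' ∈ S₂ := ⟨ρ', inferInstance, hfst', hsnd', rfl⟩
    have hmem₃ : (∫ p, Set.indicator {q : T × T | q.1 ≠ q.2} (fun _ => ‖p.1‖) p.2 ∂ρ)
        ∈ S₃ := ⟨ρ, inferInstance, hfst, hsnd, rfl⟩
    have h2' := le_csSup hBdd₂ hmem₂
    have h3' := le_csSup hBdd₃ hmem₃
    rw [hval₁]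
    rw [hval₂] at h2'
    linarith
  have hfin : fernique P μ ≤ sSup S₂ + 2 * sSup S₃ := csSup_le hne₁ hmain
  have e2 : fernique P μ' = sSup S₂ := rfl
  linarith [hfin, e2.le, e2.ge]
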